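/- Consider the LCM-with-poking mechanism: given query q with sensitivity 1, threshold c, tolerance (α, β) with 0 < β < 1/2, and fraction f > 0, it first computes x̃ = q(D) − c + η₀ with η₀ ∼ Laplace(1/ε₀) where ε₀ = f·ln(1/(2β))/α and sets α₀ = ln(1/β)/ε₀; if x̃ − α₀ + α ≥ 0 it returns True, if x̃ + α₀ − α ≤ 0 it returns False, and otherwise it runs an independent Laplace comparison mechanism achieving (α, β/2)-LCC tolerance. Then the overall mechanism satisfies (α, β)-LCC tolerance: P(output True | q(D) < c − α) ≤ β and P(output False | q(D) > c + α) ≤ β. -/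

import Mathlib

open MeasureTheory

/-- The Laplace distribution with scale `b`. -/
noncomputable def laplace (b : ℝ) : Measure ℝ :=
  volume.withDensity fun z => ENNReal.ofReal ((1 / (2 * b)) * Real.exp (-|z| / b))

open Set Real in
lemma laplace_Ioi {b : ℝ} (hb : 0 < b) {t : ℝ} (ht : 0 ≤ t) :
    laplace b (Set.Ioi t) = ENNReal.ofReal (Real.exp (-t / b) / 2) := by
  rw [laplace, withDensity_apply _ measurableSet_Ioi]
  have h1 : ∀ z ∈ Ioi t,
      ENNReal.ofReal ((1 / (2 * b)) * Real.exp (-|z| / b))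
        = ENNReal.ofReal ((1 / (2 * b)) * Real.exp (-z / b)) := fun z hz => by
    rw [abs_of_nonneg (le_trans ht (le_of_lt hz))]
  rw [setLIntegral_congr_fun measurableSet_Ioi (fun z hz => h1 z hz)]
  have hint : IntegrableOn (fun z => (1 / (2 * b)) * Real.exp (-z / b)) (Ioi t) := by
    have h := (exp_neg_integrableOn_Ioi t (show (0:ℝ) < 1 / b by positivity)).const_mul
      (1 / (2 * b))
    have e : (fun z : ℝ => 1 / (2 * b) * Real.exp (-z / b))
        = fun x : ℝ => 1 / (2 * b) * Real.exp (-(1 / b) * x) := by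
      funext z; rw [show (-(1 / b) * z : ℝ) = -z / b by ring]
    rw [IntegrableOn, e]
    exact h
  rw [← ofReal_integral_eq_lintegral_ofReal hint
    (Filter.Eventually.of_forall fun z => by positivity)]
  congr 1
  have h2 : ∫ z in Ioi t, Real.exp (-z / b) = b * Real.exp (-t / b) := by
    have h := integral_comp_mul_left_Ioi (fun x => Real.exp (-x)) t
      (show (0:ℝ) < 1 / b by positivity)
    simp only [integral_exp_neg_Ioi, smul_eq_mul] at h
    have e1 : ∀ z : ℝ, Real.exp (-(1 / b * z)) = Real.exp (-z / b) := fun z => by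
      rw [neg_div]; ring_nf
    rw [setIntegral_congr_fun measurableSet_Ioi (fun z _ => e1 z)] at h
    rw [h, one_div, inv_inv, neg_div, div_eq_inv_mul]
  rw [MeasureTheory.integral_const_mul, h2]
  field_simp

lemma laplace_Ici {b : ℝ} (hb : 0 < b) {t : ℝ} (ht : 0 ≤ t) :
    laplace b (Set.Ici t) = ENNReal.ofReal (Real.exp (-t / b) / 2) := by
  rw [laplace, withDensity_apply _ measurableSet_Ici,
    ← Measure.restrict_congr_set Ioi_ae_eq_Ici, ← withDensity_apply _ measurableSet_Ioi]
  exact laplace_Ioi hb ht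

lemma laplace_density_measurable (b : ℝ) :
    Measurable fun z : ℝ => ENNReal.ofReal ((1 / (2 * b)) * Real.exp (-|z| / b)) := by
  fun_prop

lemma laplace_Iic_neg {b t : ℝ} : laplace b (Set.Iic (-t)) = laplace b (Set.Ici t) := by
  set g : ℝ → ENNReal := fun z => ENNReal.ofReal ((1 / (2 * b)) * Real.exp (-|z| / b)) with hg
  have hmeas : Measurable g := laplace_density_measurable b
  rw [laplace, withDensity_apply _ measurableSet_Iic, withDensity_apply _ measurableSet_Ici,
    ← lintegral_indicator measurableSet_Iic, ← lintegral_indicator measurableSet_Ici]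
  have key : ∀ z : ℝ, (Set.Iic (-t)).indicator g (-z) = (Set.Ici t).indicator g z := by
    intro z
    by_cases h : t ≤ z
    · rw [Set.indicator_of_mem (by simpa using neg_le_neg h),
        Set.indicator_of_mem (by exact h)]
      simp [hg, abs_neg]
    · rw [Set.indicator_of_notMem (a := -z) (by simp; linarith),
        Set.indicator_of_notMem (by exact h)]
  calc ∫⁻ z, (Set.Iic (-t)).indicator g z
      = ∫⁻ z, (Set.Iic (-t)).indicator g (-z) := by
        exact ((Measure.measurePreserving_neg (volume : Measure ℝ)).lintegral_comp
          (hmeas.indicator measurableSet_Iic)).symm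
    _ = ∫⁻ z, (Set.Ici t).indicator g z := by simp only [key]

lemma laplace_Iic {b : ℝ} (hb : 0 < b) {t : ℝ} (ht : t ≤ 0) :
    laplace b (Set.Iic t) = ENNReal.ofReal (Real.exp (t / b) / 2) := by
  have : t = -(-t) := by ring
  rw [this, laplace_Iic_neg, laplace_Ici hb (by linarith), neg_neg]

lemma laplace_univ {b : ℝ} (hb : 0 < b) : laplace b Set.univ = 1 := by
  rw [← Set.Iic_union_Ioi (a := (0:ℝ)),
    measure_union (Set.Iic_disjoint_Ioi le_rfl) measurableSet_Ioi,
    laplace_Iic hb le_rfl, laplace_Ioi hb le_rfl]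
  norm_num
  rw [← ENNReal.ofReal_add (by norm_num) (by norm_num)]
  norm_num


/-- LCM with poking: with `ε₀ = f·ln(1/(2β))/α`, `α₀ = ln(1/β)/ε₀`,
`x̃ = q(D) − c + η₀`, `η₀ ∼ Laplace(1/ε₀)`, the mechanism returns True if
`x̃ − α₀ + α ≥ 0`, False if `x̃ + α₀ − α ≤ 0`, and otherwise returns the answer
of an independent Laplace comparison mechanism with noise
`η' ∼ Laplace(α/ln(1/β))`. It satisfies `(α, β)`-LCC tolerance. -/
theorem lcm_poking_tolerance {D : Type} (neighbor : D → D → Prop) (q : D → ℝ)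
    (hsens : ∀ d d', neighbor d d' → |q d - q d'| ≤ 1)
    (c α β f : ℝ) (hα : 0 < α) (hβ0 : 0 < β) (hβ : β < 1 / 2) (hf : 0 < f) :
    ∀ d : D,
      (q d < c - α →
        ((laplace (1 / (f * Real.log (1 / (2 * β)) / α))).prod
            (laplace (α / Real.log (1 / β))))
          {p : ℝ × ℝ |
            (0 ≤ q d - c + p.1 - Real.log (1 / β) / (f * Real.log (1 / (2 * β)) / α) + α) ∨
            (¬ (0 ≤ q d - c + p.1 - Real.log (1 / β) / (f * Real.log (1 / (2 * β)) / α) + α) ∧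
             ¬ (q d - c + p.1 + Real.log (1 / β) / (f * Real.log (1 / (2 * β)) / α) - α ≤ 0) ∧
             0 < q d - c + p.2)} ≤ ENNReal.ofReal β) ∧
      (c + α < q d →
        ((laplace (1 / (f * Real.log (1 / (2 * β)) / α))).prod
            (laplace (α / Real.log (1 / β))))
          {p : ℝ × ℝ |
            ¬ ((0 ≤ q d - c + p.1 - Real.log (1 / β) / (f * Real.log (1 / (2 * β)) / α) + α) ∨
              (¬ (0 ≤ q d - c + p.1 - Real.log (1 / β) / (f * Real.log (1 / (2 * β)) / α) + α) ∧
               ¬ (q d - c + p.1 + Real.log (1 / β) / (f * Real.log (1 / (2 * β)) / α) - α ≤ 0) ∧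
               0 < q d - c + p.2))} ≤ ENNReal.ofReal β) := by
  intro d
  have hL1 : 0 < Real.log (1 / β) := Real.log_pos ((one_lt_div hβ0).mpr (by linarith))
  have hL2 : 0 < Real.log (1 / (2 * β)) :=
    Real.log_pos ((one_lt_div (by linarith)).mpr (by linarith))
  set ε₀ := f * Real.log (1 / (2 * β)) / α with hε₀def
  have hε₀ : 0 < ε₀ := by positivity
  set b₁ := 1 / ε₀ with hb₁def
  set α₀ := Real.log (1 / β) / ε₀ with hα₀def
  set b₂ := α / Real.log (1 / β) with hb₂def
  have hb₁ : 0 < b₁ := by positivity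
  have hb₂ : 0 < b₂ := by positivity
  have hα₀ : 0 < α₀ := by positivity
  haveI : IsProbabilityMeasure (laplace b₁) := ⟨laplace_univ hb₁⟩
  haveI : IsProbabilityMeasure (laplace b₂) := ⟨laplace_univ hb₂⟩
  have hexp1 : -α₀ / b₁ = -Real.log (1 / β) := by
    rw [hα₀def, hb₁def]; field_simp
  have hexp2 : -α / b₂ = -Real.log (1 / β) := by
    rw [hb₂def]; field_simp
  have hT1 : laplace b₁ (Set.Ici α₀) = ENNReal.ofReal (β / 2) := by
    rw [laplace_Ici hb₁ hα₀.le, hexp1, one_div, Real.log_inv, neg_neg, Real.exp_log hβ0]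
  have hT2 : laplace b₂ (Set.Ici α) = ENNReal.ofReal (β / 2) := by
    rw [laplace_Ici hb₂ hα.le, hexp2, one_div, Real.log_inv, neg_neg, Real.exp_log hβ0]
  have hT1' : laplace b₁ (Set.Iic (-α₀)) = ENNReal.ofReal (β / 2) := by
    rw [laplace_Iic_neg, hT1]
  have hT2' : laplace b₂ (Set.Iic (-α)) = ENNReal.ofReal (β / 2) := by
    rw [laplace_Iic_neg, hT2]
  have hsum : ENNReal.ofReal (β / 2) + ENNReal.ofReal (β / 2) = ENNReal.ofReal β := by
    rw [← ENNReal.ofReal_add (by positivity) (by positivity)]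
    norm_num
  constructor
  · intro hqd
    have hsub : {p : ℝ × ℝ |
        (0 ≤ q d - c + p.1 - α₀ + α) ∨
        (¬ (0 ≤ q d - c + p.1 - α₀ + α) ∧
         ¬ (q d - c + p.1 + α₀ - α ≤ 0) ∧
         0 < q d - c + p.2)} ⊆
        (Set.Ici α₀ ×ˢ (Set.univ : Set ℝ)) ∪ ((Set.univ : Set ℝ) ×ˢ Set.Ici α) := by
      rintro ⟨p1, p2⟩ (h | ⟨h1, h2, h3⟩)
      · exact Or.inl ⟨Set.mem_Ici.mpr (by linarith), trivial⟩
      · exact Or.inr ⟨trivial, Set.mem_Ici.mpr (by linarith)⟩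
    calc ((laplace b₁).prod (laplace b₂)) _ ≤ ((laplace b₁).prod (laplace b₂))
          ((Set.Ici α₀ ×ˢ (Set.univ : Set ℝ)) ∪ ((Set.univ : Set ℝ) ×ˢ Set.Ici α)) :=
        measure_mono hsub
      _ ≤ ((laplace b₁).prod (laplace b₂)) (Set.Ici α₀ ×ˢ (Set.univ : Set ℝ)) +
          ((laplace b₁).prod (laplace b₂)) ((Set.univ : Set ℝ) ×ˢ Set.Ici α) :=
        measure_union_le _ _
      _ = ENNReal.ofReal β := by
        rw [Measure.prod_prod, Measure.prod_prod, measure_univ, measure_univ, mul_one, one_mul, hT1, hT2, hsum]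
  · intro hqd
    have hsub : {p : ℝ × ℝ |
        ¬ ((0 ≤ q d - c + p.1 - α₀ + α) ∨
          (¬ (0 ≤ q d - c + p.1 - α₀ + α) ∧
           ¬ (q d - c + p.1 + α₀ - α ≤ 0) ∧
           0 < q d - c + p.2))} ⊆
        (Set.Iic (-α₀) ×ˢ (Set.univ : Set ℝ)) ∪ ((Set.univ : Set ℝ) ×ˢ Set.Iic (-α)) := by
      rintro ⟨p1, p2⟩ h
      simp only [Set.mem_setOf_eq] at h
      have hA : ¬ (0 ≤ q d - c + p1 - α₀ + α) := fun a => h (Or.inl a)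
      by_cases hB : q d - c + p1 + α₀ - α ≤ 0
      · exact Or.inl ⟨Set.mem_Iic.mpr (by linarith), trivial⟩
      · have hC : ¬ (0 < q d - c + p2) := fun hc => h (Or.inr ⟨hA, hB, hc⟩)
        push_neg at hC
        exact Or.inr ⟨trivial, Set.mem_Iic.mpr (by linarith)⟩
    calc ((laplace b₁).prod (laplace b₂)) _ ≤ ((laplace b₁).prod (laplace b₂))
          ((Set.Iic (-α₀) ×ˢ (Set.univ : Set ℝ)) ∪ ((Set.univ : Set ℝ) ×ˢ Set.Iic (-α))) :=
        measure_mono hsub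
      _ ≤ ((laplace b₁).prod (laplace b₂)) (Set.Iic (-α₀) ×ˢ (Set.univ : Set ℝ)) +
          ((laplace b₁).prod (laplace b₂)) ((Set.univ : Set ℝ) ×ˢ Set.Iic (-α)) :=
        measure_union_le _ _
      _ = ENNReal.ofReal β := by
        rw [Measure.prod_prod, Measure.prod_prod, measure_univ, measure_univ, mul_one, one_mul, hT1', hT2', hsum]
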